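/- arXiv:1309.6748 — 4 statements merged into one kernel-verified Lean document; each statement's English description precedes it below -/
import Mathlib

section
/- For K ≥ 1 and z, w in the closed unit disk, the radial stretching ρ(z) = z|z|^{1/K-1} satisfies |ρ(z) - ρ(w)| ≤ 2^{1-1/K} |z - w|^{1/K}. -/
open Complex ComplexConjugate

private lemma my_rpow_add_le {a b p : ℝ} (ha : 0 ≤ a) (hb : 0 ≤ b) (hp0 : 0 ≤ p)
    (hp1 : p ≤ 1) : (a + b) ^ p ≤ a ^ p + b ^ p := by
  have h := NNReal.rpow_add_le_add_rpow (⟨a, ha⟩ : NNReal) ⟨b, hb⟩ hp0 hp1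
  exact_mod_cast h

private lemma my_rpow_sub_le {s r p : ℝ} (hs : 0 ≤ s) (hsr : s ≤ r) (hp0 : 0 ≤ p)
    (hp1 : p ≤ 1) : r ^ p - s ^ p ≤ (r - s) ^ p := by
  have h := my_rpow_add_le (sub_nonneg.2 hsr) hs hp0 hp1
  rw [sub_add_cancel] at h
  linarith

private lemma my_rpow_mean {r s p : ℝ} (hr : 0 ≤ r) (hs : 0 ≤ s) (hp0 : 0 ≤ p)
    (hp1 : p ≤ 1) : r ^ p + s ^ p ≤ 2 ^ (1 - p) * (r + s) ^ p := by
  have hc := (Real.concaveOn_rpow hp0 hp1).2 (Set.mem_Ici.2 hr) (Set.mem_Ici.2 hs)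
    (by norm_num : (0:ℝ) ≤ 1/2) (by norm_num : (0:ℝ) ≤ 1/2) (by norm_num)
  simp only [smul_eq_mul] at hc
  have h2 : (0:ℝ) < 2 ^ p := Real.rpow_pos_of_pos (by norm_num) p
  have hdiv : ((r + s)/2) ^ p = (r + s) ^ p / 2 ^ p :=
    Real.div_rpow (by linarith) (by norm_num) p
  have h12 : (1:ℝ)/2 * r + 1/2 * s = (r+s)/2 := by ring
  rw [h12, hdiv] at hc
  have h2p : (2:ℝ) ^ (1 - p) = 2 / 2 ^ p := by
    rw [Real.rpow_sub (by norm_num), Real.rpow_one]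
  rw [h2p, div_mul_eq_mul_div, le_div_iff₀ h2]
  have := mul_le_mul_of_nonneg_left hc (by positivity : (0:ℝ) ≤ 2 * 2 ^ p)
  calc (r ^ p + s ^ p) * 2 ^ p = 2 * 2 ^ p * (1/2 * r ^ p + 1/2 * s ^ p) := by ring
    _ ≤ 2 * 2 ^ p * ((r + s) ^ p / 2 ^ p) := this
    _ = 2 * (r + s) ^ p := by field_simp

private lemma my_sq_rpow {p : ℝ} (hp : 0 ≤ p) (x : ℝ) : (x ^ 2) ^ p = (|x| ^ p) ^ 2 := by
  calc (x ^ 2) ^ p = (|x| ^ 2) ^ p := by rw [_root_.sq_abs]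
    _ = (|x| ^ (2:ℝ)) ^ p := by rw [Real.rpow_two]
    _ = |x| ^ ((2:ℝ) * p) := (Real.rpow_mul (abs_nonneg x) 2 p).symm
    _ = (|x| ^ p) ^ (2:ℝ) := by rw [mul_comm, Real.rpow_mul (abs_nonneg x)]
    _ = (|x| ^ p) ^ 2 := Real.rpow_two _

/-- The radial stretching `ρ(z) = z |z|^{1/K - 1}`. -/
noncomputable def radialStretching (K : ℝ) (z : ℂ) : ℂ :=
  z * ((‖z‖ ^ (1 / K - 1) : ℝ) : ℂ)

theorem radialStretching_holder (K : ℝ) (hK : 1 ≤ K)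
    (z w : ℂ) (hz : z ∈ Metric.closedBall (0 : ℂ) 1) (hw : w ∈ Metric.closedBall (0 : ℂ) 1) :
    ‖radialStretching K z - radialStretching K w‖ ≤
      2 ^ (1 - 1 / K) * ‖z - w‖ ^ (1 / K) := by
  clear hz hw
  have hK0 : (0:ℝ) < K := lt_of_lt_of_le one_pos hK
  set α : ℝ := 1 / K with hα
  have hα0 : 0 < α := by positivity
  have hα1 : α ≤ 1 := by rw [hα, div_le_one hK0]; exact hK
  have hC1 : (1:ℝ) ≤ 2 ^ (1 - α) := by
    have h := Real.rpow_le_rpow_of_exponent_le (by norm_num : (1:ℝ) ≤ 2)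
      (by linarith : (0:ℝ) ≤ 1 - α)
    simpa using h
  have hCpos : (0:ℝ) < 2 ^ (1 - α) := by positivity
  have habs : ∀ u : ℂ,
      ‖radialStretching K u‖ = ‖u‖ * ‖u‖ ^ (α - 1) := by
    intro u
    rw [radialStretching, norm_mul, Complex.norm_real, Real.norm_eq_abs, ← hα,
      _root_.abs_of_nonneg (Real.rpow_nonneg (norm_nonneg u) _)]
  -- degenerate cases
  rcases eq_or_ne z 0 with rfl | hz0
  · rcases eq_or_ne w 0 with rfl | hw0
    · simp only [sub_self, norm_zero]
      positivity
    · have hs : 0 < ‖w‖ := norm_pos_iff.mpr hw0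
      have h0 : radialStretching K 0 = 0 := by simp [radialStretching]
      have h1 : ‖radialStretching K 0 - radialStretching K w‖
          = ‖w‖ ^ α := by
        rw [h0, zero_sub, norm_neg, habs w, mul_comm,
          ← Real.rpow_add_one hs.ne' (α - 1)]
        norm_num
      rw [h1, zero_sub, norm_neg]
      nlinarith [Real.rpow_nonneg (norm_nonneg w) α]
  rcases eq_or_ne w 0 with rfl | hw0
  · have hr : 0 < ‖z‖ := norm_pos_iff.mpr hz0
    have h1 : ‖radialStretching K z - radialStretching K 0‖
        = ‖z‖ ^ α := by
      have h0 : radialStretching K 0 = 0 := by simp [radialStretching]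
      rw [h0, sub_zero, habs z, mul_comm, ← Real.rpow_add_one hr.ne' (α - 1)]
      norm_num
    rw [h1, sub_zero]
    nlinarith [Real.rpow_nonneg (norm_nonneg z) α]
  -- main case
  have hr : 0 < ‖z‖ := norm_pos_iff.mpr hz0
  have hs : 0 < ‖w‖ := norm_pos_iff.mpr hw0
  set r : ℝ := ‖z‖ with hrdef
  set s : ℝ := ‖w‖ with hsdef
  set X : ℝ := r ^ α with hXdef
  set Y : ℝ := s ^ α with hYdef
  have hX : 0 < X := Real.rpow_pos_of_pos hr α
  have hY : 0 < Y := Real.rpow_pos_of_pos hs α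
  have hrX : r ^ (α - 1) = X / r := by
    rw [eq_div_iff hr.ne', hXdef, ← Real.rpow_add_one hr.ne' (α - 1)]
    norm_num
  have hsY : s ^ (α - 1) = Y / s := by
    rw [eq_div_iff hs.ne', hYdef, ← Real.rpow_add_one hs.ne' (α - 1)]
    norm_num
  set P : ℝ := (z * conj w).re with hPdef
  have hP : |P| ≤ r * s := by
    calc |P| ≤ ‖z * conj w‖ := Complex.abs_re_le_norm _
      _ = r * s := by rw [norm_mul, Complex.norm_conj]
  set t : ℝ := (r * s + P) / (2 * (r * s)) with htdef
  have hrs : 0 < r * s := mul_pos hr hs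
  have ht0 : 0 ≤ t := by
    apply div_nonneg _ (by positivity)
    have := (abs_le.1 hP).1
    linarith
  have ht1 : t ≤ 1 := by
    rw [htdef, div_le_one (by positivity)]
    have := (abs_le.1 hP).2
    linarith
  have h1t : 0 ≤ 1 - t := by linarith
  -- identity for |z - w|^2
  have hd2 : ‖z - w‖ ^ 2 = t * (r - s) ^ 2 + (1 - t) * (r + s) ^ 2 := by
    have h1 : ‖z - w‖ ^ 2 = r ^ 2 + s ^ 2 - 2 * P := by
      rw [Complex.sq_norm, Complex.normSq_sub, ← Complex.sq_norm z, ← Complex.sq_norm w]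
    rw [h1, htdef]
    field_simp
    ring
  -- identity for |ρz - ρw|^2
  have hL2 : ‖radialStretching K z - radialStretching K w‖ ^ 2
      = t * (X - Y) ^ 2 + (1 - t) * (X + Y) ^ 2 := by
    have hmul : radialStretching K z * conj (radialStretching K w)
        = ((r ^ (α - 1) * s ^ (α - 1) : ℝ) : ℂ) * (z * conj w) := by
      simp only [radialStretching, ← hα, map_mul, Complex.conj_ofReal]
      push_cast
      ring
    have hre : (radialStretching K z * conj (radialStretching K w)).re
        = (X / r) * (Y / s) * P := by
      rw [hmul, Complex.re_ofReal_mul, hrX, hsY, hPdef]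
    have hnz : Complex.normSq (radialStretching K z) = X ^ 2 := by
      rw [← Complex.sq_norm, habs z, ← hrdef, hrX]
      field_simp
    have hnw : Complex.normSq (radialStretching K w) = Y ^ 2 := by
      rw [← Complex.sq_norm, habs w, ← hsdef, hsY]
      field_simp
    rw [Complex.sq_norm, Complex.normSq_sub, hnz, hnw, hre, htdef]
    field_simp
    ring
  -- scalar inequalities
  have hE1 : (X - Y) ^ 2 ≤ (2 ^ (1 - α)) ^ 2 * ((r - s) ^ 2) ^ α := by
    have h1 : |X - Y| ≤ |r - s| ^ α := by
      rcases le_total s r with h | h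
      · have h2 : Y ≤ X := Real.rpow_le_rpow hs.le h hα0.le
        rw [_root_.abs_of_nonneg (by linarith : (0:ℝ) ≤ X - Y),
          _root_.abs_of_nonneg (by linarith : (0:ℝ) ≤ r - s)]
        exact my_rpow_sub_le hs.le h hα0.le hα1
      · have h2 : X ≤ Y := Real.rpow_le_rpow hr.le h hα0.le
        rw [abs_of_nonpos (by linarith : X - Y ≤ 0), abs_of_nonpos (by linarith : r - s ≤ 0),
          neg_sub, neg_sub]
        exact my_rpow_sub_le hr.le h hα0.le hα1
    calc (X - Y) ^ 2 = |X - Y| ^ 2 := (_root_.sq_abs _).symm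
      _ ≤ (|r - s| ^ α) ^ 2 := by
          apply pow_le_pow_left₀ (abs_nonneg _) h1
      _ ≤ (2 ^ (1 - α)) ^ 2 * (|r - s| ^ α) ^ 2 :=
          le_mul_of_one_le_left (sq_nonneg _) (by nlinarith)
      _ = (2 ^ (1 - α)) ^ 2 * ((r - s) ^ 2) ^ α := by rw [my_sq_rpow hα0.le]
  have hE2 : (X + Y) ^ 2 ≤ (2 ^ (1 - α)) ^ 2 * ((r + s) ^ 2) ^ α := by
    have h1 : X + Y ≤ 2 ^ (1 - α) * (r + s) ^ α := my_rpow_mean hr.le hs.le hα0.le hα1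
    have h2 : (r + s) ^ α = |r + s| ^ α := by rw [_root_.abs_of_nonneg (by positivity : (0:ℝ) ≤ r + s)]
    calc (X + Y) ^ 2 ≤ (2 ^ (1 - α) * (r + s) ^ α) ^ 2 := by
          apply pow_le_pow_left₀ (by positivity) h1
      _ = (2 ^ (1 - α)) ^ 2 * (|r + s| ^ α) ^ 2 := by rw [h2]; ring
      _ = (2 ^ (1 - α)) ^ 2 * ((r + s) ^ 2) ^ α := by rw [my_sq_rpow hα0.le]
  -- concavity
  have hconc : t * ((r - s) ^ 2) ^ α + (1 - t) * ((r + s) ^ 2) ^ α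
      ≤ (t * (r - s) ^ 2 + (1 - t) * (r + s) ^ 2) ^ α := by
    have h := (Real.concaveOn_rpow hα0.le hα1).2
      (Set.mem_Ici.2 (sq_nonneg (r - s))) (Set.mem_Ici.2 (sq_nonneg (r + s)))
      ht0 h1t (by ring)
    simpa only [smul_eq_mul] using h
  -- combine
  have hfin : ‖radialStretching K z - radialStretching K w‖ ^ 2
      ≤ (2 ^ (1 - α) * ‖z - w‖ ^ α) ^ 2 := by
    rw [hL2]
    calc t * (X - Y) ^ 2 + (1 - t) * (X + Y) ^ 2
        ≤ t * ((2 ^ (1 - α)) ^ 2 * ((r - s) ^ 2) ^ α)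
          + (1 - t) * ((2 ^ (1 - α)) ^ 2 * ((r + s) ^ 2) ^ α) :=
          add_le_add (mul_le_mul_of_nonneg_left hE1 ht0)
            (mul_le_mul_of_nonneg_left hE2 h1t)
      _ = (2 ^ (1 - α)) ^ 2 * (t * ((r - s) ^ 2) ^ α + (1 - t) * ((r + s) ^ 2) ^ α) := by
          ring
      _ ≤ (2 ^ (1 - α)) ^ 2 * (t * (r - s) ^ 2 + (1 - t) * (r + s) ^ 2) ^ α :=
          mul_le_mul_of_nonneg_left hconc (by positivity)
      _ = (2 ^ (1 - α)) ^ 2 * (‖z - w‖ ^ 2) ^ α := by rw [hd2]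
      _ = (2 ^ (1 - α) * ‖z - w‖ ^ α) ^ 2 := by
          rw [my_sq_rpow hα0.le, _root_.abs_of_nonneg (norm_nonneg _)]
          ring
  have h := Real.sqrt_le_sqrt hfin
  rwa [Real.sqrt_sq (norm_nonneg _), Real.sqrt_sq (by positivity)] at h
end

section
/- For any K ≥ 1 and any C < 4^{1-1/K} there exist, for all sufficiently large R > 1, points z, w in the unit disk with |z - w| = 4R/(R²+1) ≤ 1 such that the ratio (4R^{1/K}/(R^{2/K}+1)) / (4R/(R²+1))^{1/K} exceeds C/4^{1-1/K}; in particular, 4R^{1/K}/(R^{2/K}+1) > C·(4R/(R²+1))^{1/K} for large R. -/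
open Complex Filter

theorem sharpness_ratio_exceeds (K C : ℝ) (hK : 1 ≤ K) (hC : C < 4 ^ (1 - 1 / K)) :
    ∃ R₀ : ℝ, 1 < R₀ ∧ ∀ R : ℝ, R₀ ≤ R →
      (∃ z w : ℂ, ‖z‖ < 1 ∧ ‖w‖ < 1 ∧
        ‖z - w‖ = 4 * R / (R ^ 2 + 1)) ∧
      4 * R / (R ^ 2 + 1) ≤ 1 ∧
      (4 * R ^ (1 / K) / (R ^ (2 / K) + 1)) / (4 * R / (R ^ 2 + 1)) ^ (1 / K) >
        C / 4 ^ (1 - 1 / K) ∧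
      4 * R ^ (1 / K) / (R ^ (2 / K) + 1) > C * (4 * R / (R ^ 2 + 1)) ^ (1 / K) := by
  have hK0 : (0:ℝ) < K := lt_of_lt_of_le one_pos hK
  have hexp0 : (0:ℝ) ≤ 1 - 1/K := sub_nonneg.mpr ((div_le_one hK0).mpr hK)
  set A : ℝ := (4:ℝ) ^ (1 - 1/K) with hAdef
  have hA1 : (1:ℝ) ≤ A := by
    calc (1:ℝ) = (4:ℝ) ^ (0:ℝ) := (Real.rpow_zero 4).symm
    _ ≤ A := Real.rpow_le_rpow_of_exponent_le (by norm_num) hexp0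
  have hA0 : (0:ℝ) < A := lt_of_lt_of_le one_pos hA1
  set c : ℝ := max C 0 / A with hcdef
  have hc0 : 0 ≤ c := div_nonneg (le_max_right _ _) hA0.le
  have hc1 : c < 1 := (div_lt_one hA0).mpr (max_lt hC hA0)
  have h1c : 0 < 1 - c := by linarith
  set M : ℝ := c / (1 - c) + 1 with hMdef
  have hM1 : 1 ≤ M := le_add_of_nonneg_left (div_nonneg hc0 h1c.le)
  have hM0 : (0:ℝ) < M := lt_of_lt_of_le one_pos hM1
  refine ⟨max 4 (M ^ K), lt_of_lt_of_le (by norm_num) (le_max_left _ _), ?_⟩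
  intro R hR
  have hR4 : (4:ℝ) ≤ R := le_trans (le_max_left _ _) hR
  have hRM : M ^ K ≤ R := le_trans (le_max_right _ _) hR
  have hR0 : (0:ℝ) < R := by linarith
  set d : ℝ := 4 * R / (R ^ 2 + 1) with hddef
  have hd0 : 0 < d := by positivity
  have hd1 : d < 1 := by
    rw [hddef, div_lt_one (by positivity)]
    nlinarith
  set a : ℝ := R ^ (1/K) with hadef
  set t : ℝ := R ^ (2/K) with htdef
  set b : ℝ := (4:ℝ) ^ (1/K) with hbdef
  have ha0 : 0 < a := Real.rpow_pos_of_pos hR0 _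
  have hb0 : 0 < b := Real.rpow_pos_of_pos (by norm_num) _
  have ht0 : 0 < t := Real.rpow_pos_of_pos hR0 _
  -- t is large
  have htlarge : c / (1 - c) < t := by
    have h1 : (M ^ K) ^ (2/K) ≤ t :=
      Real.rpow_le_rpow (by positivity) hRM (by positivity)
    have h2 : (M ^ K) ^ (2/K) = M ^ (2:ℝ) := by
      rw [← Real.rpow_mul hM0.le]
      congr 1
      field_simp
    have h3 : M ^ (1:ℝ) ≤ M ^ (2:ℝ) :=
      Real.rpow_le_rpow_of_exponent_le hM1 (by norm_num)
    rw [Real.rpow_one] at h3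
    rw [h2] at h1
    have : M ≤ t := le_trans h3 h1
    rw [hMdef] at this
    linarith
  have key : c < t / (t + 1) := by
    rw [lt_div_iff₀ (by positivity)]
    have := (div_lt_iff₀ h1c).mp htlarge
    nlinarith
  have haa : a * a = t := by
    rw [hadef, htdef, ← Real.rpow_add hR0]
    congr 1
    ring
  have hdenom0 : 0 < d ^ (1/K) := Real.rpow_pos_of_pos hd0 _
  have hdb : d ^ (1/K) ≤ b / a := by
    have hd4R : d ≤ 4 / R := by
      rw [hddef, div_le_div_iff₀ (by positivity) hR0]
      nlinarith
    calc d ^ (1/K) ≤ (4 / R) ^ (1/K) :=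
          Real.rpow_le_rpow hd0.le hd4R (by positivity)
    _ = b / a := Real.div_rpow (by norm_num) hR0.le _
  have hA4b : A = 4 / b := by
    rw [hAdef, hbdef, Real.rpow_sub (by norm_num), Real.rpow_one]
  have hratio_eq : (4 * a / (t + 1)) / (b / a) = A * (t / (t + 1)) := by
    rw [hA4b, ← haa]
    field_simp
  have hmain : A * (t / (t + 1)) ≤ (4 * a / (t + 1)) / d ^ (1/K) := by
    rw [← hratio_eq]
    gcongr
  have hAc : A * c = max C 0 := by
    rw [hcdef, mul_div_cancel₀ _ hA0.ne']
  have h2 : max C 0 < A * (t / (t + 1)) := by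
    rw [← hAc]
    exact mul_lt_mul_of_pos_left key hA0
  have hCA : C / A ≤ max C 0 := by
    rcases le_or_gt 0 C with h | h
    · calc C / A ≤ C := div_le_self h hA1
      _ ≤ max C 0 := le_max_left _ _
    · calc C / A ≤ 0 := div_nonpos_of_nonpos_of_nonneg h.le hA0.le
      _ ≤ max C 0 := le_max_right _ _
  have hfinal : C / A < (4 * a / (t + 1)) / d ^ (1/K) :=
    lt_of_le_of_lt hCA (lt_of_lt_of_le h2 hmain)
  have hfinal2 : C < (4 * a / (t + 1)) / d ^ (1/K) :=
    lt_of_le_of_lt (le_max_left C 0) (lt_of_lt_of_le h2 hmain)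
  refine ⟨⟨(d : ℂ), 0, ?_, ?_, ?_⟩, hd1.le, hfinal, ?_⟩
  · rwa [Complex.norm_real, Real.norm_eq_abs, _root_.abs_of_nonneg hd0.le]
  · simp
  · rw [sub_zero, Complex.norm_real, Real.norm_eq_abs, _root_.abs_of_nonneg hd0.le]
  · exact (lt_div_iff₀ hdenom0).mp hfinal2
end

section
/- Let R > 1, K ≥ 1, and define g = φ ∘ ρ ∘ φ⁻¹ on E_R \ [-2,2], where φ(z) = z + 1/z maps A_R = {1 < |z| < R} conformally onto E_R \ [-2,2] and ρ(z) = z|z|^{1/K-1}. Then g extends continuously across the slit [-2,2] to a homeomorphism of the closed ellipse Ē_R onto Ē_{R^{1/K}} fixing ±2, with g(x) = x for x ∈ [-2,2]. -/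
open Complex

/-- The Joukowski map. -/
noncomputable def joukowski (z : ℂ) : ℂ := z + z⁻¹

/-- The open ellipse with foci `±2` and semi-axis sum `2 (R + 1/R)`. -/
def openEllipse (R : ℝ) : Set ℂ :=
  {z : ℂ | ‖z - 2‖ + ‖z + 2‖ < 2 * (R + 1 / R)}

/-- The closed ellipse with foci `±2`. -/
def closedEllipse (R : ℝ) : Set ℂ :=
  {z : ℂ | ‖z - 2‖ + ‖z + 2‖ ≤ 2 * (R + 1 / R)}

/-- The round annulus `{1 < |z| < R}`. -/
def annulus (R : ℝ) : Set ℂ := {z : ℂ | 1 < ‖z‖ ∧ ‖z‖ < R}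

namespace EllipseDeformation

/-! ### Basic identities -/

lemma jou_ellipse (w : ℂ) (hw : w ≠ 0) :
    ‖joukowski w - 2‖ + ‖joukowski w + 2‖
      = 2 * (‖w‖ + (‖w‖)⁻¹) := by
  have h1 : joukowski w - 2 = (w - 1) ^ 2 * w⁻¹ := by
    unfold joukowski; field_simp; ring
  have h2 : joukowski w + 2 = (w + 1) ^ 2 * w⁻¹ := by
    unfold joukowski; field_simp; ring
  have key : (‖w - 1‖) ^ 2 + (‖w + 1‖) ^ 2
      = 2 * ((‖w‖) ^ 2 + 1) := by
    rw [Complex.sq_norm, Complex.sq_norm, Complex.sq_norm]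
    simp [Complex.normSq_apply]; ring
  have ha : (0:ℝ) < ‖w‖ := by
    simpa [norm_pos_iff] using hw
  rw [h1, h2, norm_mul, norm_mul, norm_inv, norm_pow, norm_pow]
  field_simp
  nlinarith [key]

lemma sum_inv_lt {a b : ℝ} (ha : 1 ≤ a) (hab : a < b) : a + a⁻¹ < b + b⁻¹ := by
  have ha0 : (0:ℝ) < a := by linarith
  have hb0 : (0:ℝ) < b := by linarith
  have hdiff : b + b⁻¹ - (a + a⁻¹) = (b - a) * (a * b - 1) / (a * b) := by
    field_simp; ring
  have hab1 : 1 < a * b := by nlinarith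
  have : 0 < (b - a) * (a * b - 1) / (a * b) :=
    div_pos (mul_pos (by linarith) (by linarith)) (by positivity)
  linarith

lemma sum_inv_le {a b : ℝ} (ha : 1 ≤ a) (hab : a ≤ b) : a + a⁻¹ ≤ b + b⁻¹ := by
  rcases eq_or_lt_of_le hab with h | h
  · rw [h]
  · exact (sum_inv_lt ha h).le

lemma le_of_sum_inv_le {a b : ℝ} (hb : 1 ≤ b) (h : a + a⁻¹ ≤ b + b⁻¹) : a ≤ b := by
  by_contra hc
  push_neg at hc
  exact absurd h (not_le.mpr (sum_inv_lt hb hc))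

lemma lt_of_sum_inv_lt {a b : ℝ} (hb : 1 ≤ b) (h : a + a⁻¹ < b + b⁻¹) : a < b := by
  by_contra hc
  push_neg at hc
  rcases eq_or_lt_of_le hc with h' | h'
  · rw [h'] at h; exact lt_irrefl _ h
  · exact absurd h (not_lt.mpr (sum_inv_lt hb h').le)

lemma jou_eq_iff {a b : ℂ} (ha : a ≠ 0) (hb : b ≠ 0) (h : joukowski a = joukowski b) :
    a = b ∨ a * b = 1 := by
  unfold joukowski at h
  have h' : a ^ 2 * b + b = a * b ^ 2 + a := by
    field_simp at h; linear_combination h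
  have hfac : (a - b) * (a * b - 1) = 0 := by linear_combination h'
  rcases mul_eq_zero.mp hfac with h0 | h0
  · left; exact sub_eq_zero.mp h0
  · right; linear_combination h0

/-! ### The slit -/

lemma mem_slit_of_real {x : ℝ} (h1 : -2 ≤ x) (h2 : x ≤ 2) :
    (x : ℂ) ∈ segment ℝ (-2 : ℂ) 2 := by
  refine ⟨(2 - x) / 4, (x + 2) / 4, by linarith, by linarith, by linarith, ?_⟩
  simp [Complex.ext_iff]
  ring

lemma slit_char {z : ℂ} (h : z ∈ segment ℝ (-2 : ℂ) 2) :
    z = (z.re : ℂ) ∧ -2 ≤ z.re ∧ z.re ≤ 2 := by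
  obtain ⟨a, b, ha, hb, hab, hz⟩ := h
  have hz' : z = ((2 * b - 2 * a : ℝ) : ℂ) := by
    rw [← hz]; push_cast; simp [Complex.ext_iff]; ring
  have hre : z.re = 2 * b - 2 * a := by rw [hz']; simp
  refine ⟨by rw [hre]; exact_mod_cast hz', by rw [hre]; linarith, by rw [hre]; linarith⟩

lemma jou_unit {w : ℂ} (hw : ‖w‖ = 1) :
    joukowski w = ((2 * w.re : ℝ) : ℂ) ∧ joukowski w ∈ segment ℝ (-2 : ℂ) 2 := by
  have hinv : w⁻¹ = (starRingEnd ℂ) w := by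
    rw [Complex.inv_def, Complex.normSq_eq_norm_sq, hw]
    simp
  have h1 : joukowski w = ((2 * w.re : ℝ) : ℂ) := by
    rw [joukowski, hinv, Complex.add_conj]
  have hre : |w.re| ≤ 1 := by rw [← hw]; exact Complex.abs_re_le_norm w
  rw [h1]
  exact ⟨rfl, mem_slit_of_real (by cases abs_le.mp hre; linarith)
    (by cases abs_le.mp hre; linarith)⟩

lemma slit_surj {z : ℂ} (h : z ∈ segment ℝ (-2 : ℂ) 2) :
    ∃ w : ℂ, ‖w‖ = 1 ∧ joukowski w = z := by
  obtain ⟨hreal, h1, h2⟩ := slit_char h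
  set x := z.re
  have hx : (0:ℝ) ≤ 1 - (x / 2) ^ 2 := by nlinarith
  have hnsq : Complex.normSq (Complex.mk (x / 2) (Real.sqrt (1 - (x / 2) ^ 2))) = 1 := by
    rw [Complex.normSq_mk, Real.mul_self_sqrt hx]; ring
  have habs : ‖Complex.mk (x / 2) (Real.sqrt (1 - (x / 2) ^ 2))‖ = 1 := by
    rw [Complex.norm_def, hnsq, Real.sqrt_one]
  refine ⟨Complex.mk (x / 2) (Real.sqrt (1 - (x / 2) ^ 2)), habs, ?_⟩
  rw [(jou_unit habs).1, hreal]
  push_cast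
  ring

lemma slit_metric {z : ℂ} (h : z ∈ segment ℝ (-2 : ℂ) 2) :
    ‖z - 2‖ + ‖z + 2‖ = 4 := by
  obtain ⟨hreal, h1, h2⟩ := slit_char h
  rw [hreal]
  have e1 : ((z.re : ℂ) - 2) = ((z.re - 2 : ℝ) : ℂ) := by push_cast; ring
  have e2 : ((z.re : ℂ) + 2) = ((z.re + 2 : ℝ) : ℂ) := by push_cast; ring
  rw [e1, e2, Complex.norm_real, Complex.norm_real, Real.norm_eq_abs, Real.norm_eq_abs,
    _root_.abs_of_nonpos (by linarith), _root_.abs_of_nonneg (by linarith)]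
  ring

lemma not_slit {w : ℂ} (hw : 1 < ‖w‖) :
    joukowski w ∉ segment ℝ (-2 : ℂ) 2 := by
  intro h
  have hw0 : w ≠ 0 := by
    intro h0; rw [h0] at hw; simp at hw; linarith
  have h4 := slit_metric h
  have h5 := jou_ellipse w hw0
  have h6 : (1:ℝ) + 1⁻¹ < ‖w‖ + (‖w‖)⁻¹ := sum_inv_lt le_rfl hw
  rw [h5] at h4
  norm_num at h6
  linarith

/-! ### Preimages -/

lemma exists_preimage (z : ℂ) : ∃ w : ℂ, 1 ≤ ‖w‖ ∧ joukowski w = z := by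
  obtain ⟨s, hs⟩ := IsAlgClosed.exists_pow_nat_eq (k := ℂ) (z ^ 2 - 4) (n := 2) (by norm_num)
  set w1 := (z + s) / 2 with hw1def
  set w2 := (z - s) / 2 with hw2def
  have hprod : w1 * w2 = 1 := by
    rw [hw1def, hw2def]
    field_simp
    linear_combination -hs
  have hw1 : w1 ≠ 0 := fun h => by simp [h] at hprod
  have habs : ‖w1‖ * ‖w2‖ = 1 := by
    rw [← norm_mul, hprod, norm_one]
  have hsum : w1 + w2 = z := by rw [hw1def, hw2def]; ring
  have hj1 : joukowski w1 = z := by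
    rw [joukowski, inv_eq_of_mul_eq_one_right hprod, hsum]
  have hj2 : joukowski w2 = z := by
    rw [joukowski, inv_eq_of_mul_eq_one_right (by rw [mul_comm]; exact hprod), ← hsum]; ring
  by_cases h : 1 ≤ ‖w1‖
  · exact ⟨w1, h, hj1⟩
  · push_neg at h
    have h1 : 0 < ‖w1‖ := norm_pos_iff.mpr hw1
    refine ⟨w2, ?_, hj2⟩
    by_contra hc
    push_neg at hc
    nlinarith

/-- the outer preimage set -/
def S : Set ℂ := {w : ℂ | 1 < ‖w‖}

lemma jou_injOn_S : Set.InjOn joukowski S := by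
  intro a ha b hb h
  have ha0 : a ≠ 0 := by
    intro h0; rw [h0] at ha; simp [S] at ha; linarith
  have hb0 : b ≠ 0 := by
    intro h0; rw [h0] at hb; simp [S] at hb; linarith
  rcases jou_eq_iff ha0 hb0 h with h' | h'
  · exact h'
  · exfalso
    have : ‖a‖ * ‖b‖ = 1 := by rw [← norm_mul, h', norm_one]
    have ha' : 1 < ‖a‖ := ha
    have hb' : 1 < ‖b‖ := hb
    nlinarith

lemma preS {z : ℂ} (hz : z ∉ segment ℝ (-2 : ℂ) 2) : ∃ w ∈ S, joukowski w = z := by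
  obtain ⟨w, hw1, hwz⟩ := exists_preimage z
  rcases eq_or_lt_of_le hw1 with h | h
  · exfalso; exact hz (hwz ▸ (jou_unit h.symm).2)
  · exact ⟨w, h, hwz⟩

/-! ### Radial stretching facts -/

lemma rho_abs (K : ℝ) {w : ℂ} (hw : w ≠ 0) :
    ‖radialStretching K w‖ = ‖w‖ ^ (1 / K) := by
  have ha : (0:ℝ) < ‖w‖ := norm_pos_iff.mpr hw
  rw [radialStretching, norm_mul, Complex.norm_real, Real.norm_eq_abs,
    _root_.abs_of_nonneg (Real.rpow_nonneg ha.le _)]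
  nth_rewrite 1 [← Real.rpow_one (‖w‖)]
  rw [← Real.rpow_add ha]
  norm_num

lemma rho_unit (K : ℝ) {w : ℂ} (hw : ‖w‖ = 1) : radialStretching K w = w := by
  rw [radialStretching, hw, Real.one_rpow]
  simp

lemma rho_zero (K : ℝ) : radialStretching K 0 = 0 := by simp [radialStretching]

lemma rho_ne_zero (K : ℝ) {w : ℂ} (hw : w ≠ 0) : radialStretching K w ≠ 0 := by
  rw [radialStretching]
  apply mul_ne_zero hw
  simp only [ne_eq, Complex.ofReal_eq_zero]
  exact (Real.rpow_pos_of_pos (norm_pos_iff.mpr hw) _).ne'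

lemma rho_rho (K : ℝ) (hK : K ≠ 0) (w : ℂ) :
    radialStretching K⁻¹ (radialStretching K w) = w := by
  by_cases hw : w = 0
  · rw [hw, rho_zero, rho_zero]
  have ha : (0:ℝ) < ‖w‖ := norm_pos_iff.mpr hw
  rw [radialStretching, rho_abs K hw, radialStretching]
  rw [← Real.rpow_mul ha.le, mul_assoc, ← Complex.ofReal_mul, ← Real.rpow_add ha]
  have : 1 / K - 1 + 1 / K * (1 / K⁻¹ - 1) = 0 := by field_simp; ring
  rw [this, Real.rpow_zero]
  simp

lemma rho_rho' (K : ℝ) (hK : K ≠ 0) (w : ℂ) :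
    radialStretching K (radialStretching K⁻¹ w) = w := by
  have := rho_rho K⁻¹ (inv_ne_zero hK) w
  rwa [inv_inv] at this


open scoped Classical in
/-- the global extension -/
noncomputable def Gmap (K : ℝ) (z : ℂ) : ℂ :=
  if z ∈ segment ℝ (-2 : ℂ) 2 then z
  else joukowski (radialStretching K (Function.invFunOn joukowski S z))

/-- Key well-definedness lemma: on the image of the closed annulus,
`Gmap` is computed by any preimage. -/
lemma Gmap_jou (K : ℝ) {w : ℂ} (hw : 1 ≤ ‖w‖) :
    Gmap K (joukowski w) = joukowski (radialStretching K w) := by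
  rcases eq_or_lt_of_le hw with h | h
  · -- unit circle : slit
    rw [Gmap, if_pos (jou_unit h.symm).2, rho_unit K h.symm]
  · -- interior
    rw [Gmap, if_neg (not_slit h)]
    have hex : ∃ a ∈ S, joukowski a = joukowski w := ⟨w, h, rfl⟩
    have h1 := Function.invFunOn_mem hex
    have h2 := Function.invFunOn_eq hex
    rw [jou_injOn_S h1 h h2]

def Ann (R : ℝ) : Set ℂ := {w : ℂ | 1 ≤ ‖w‖ ∧ ‖w‖ ≤ R}

lemma jou_image (R : ℝ) (hR : 1 ≤ R) : joukowski '' Ann R = closedEllipse R := by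
  ext z
  constructor
  · rintro ⟨w, ⟨hw1, hw2⟩, rfl⟩
    have hw0 : w ≠ 0 := by
      intro h0; rw [h0] at hw1; simp at hw1; linarith
    have := jou_ellipse w hw0
    have hle : ‖w‖ + (‖w‖)⁻¹ ≤ R + R⁻¹ := sum_inv_le hw1 hw2
    simp only [closedEllipse, Set.mem_setOf_eq, one_div]
    linarith
  · intro hz
    obtain ⟨w, hw1, hwz⟩ := exists_preimage z
    have hw0 : w ≠ 0 := by
      intro h0; rw [h0] at hw1; simp at hw1; linarith
    refine ⟨w, ⟨hw1, ?_⟩, hwz⟩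
    have h1 := jou_ellipse w hw0
    rw [hwz] at h1
    simp only [closedEllipse, Set.mem_setOf_eq, one_div] at hz
    exact le_of_sum_inv_le hR (by linarith)

end EllipseDeformation

lemma one_le_rpow' {a y : ℝ} (ha : 1 ≤ a) (hy : 0 ≤ y) : 1 ≤ a ^ y := by
  calc (1:ℝ) = 1 ^ y := (Real.one_rpow y).symm
  _ ≤ a ^ y := Real.rpow_le_rpow (by norm_num) ha hy

open EllipseDeformation in
theorem ellipse_deformation_extends (R K : ℝ) (hR : 1 < R) (hK : 1 ≤ K) :
    ∃ G : ℂ → ℂ,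
      (∀ z ∈ openEllipse R \ segment ℝ (-2 : ℂ) 2,
        G z = joukowski (radialStretching K (Function.invFunOn joukowski (annulus R) z))) ∧
      ContinuousOn G (closedEllipse R) ∧
      Set.BijOn G (closedEllipse R) (closedEllipse (R ^ (1 / K))) ∧
      G 2 = 2 ∧ G (-2) = -2 ∧
      (∀ x ∈ segment ℝ (-2 : ℂ) 2, G x = x) := by
  classical
  have hKpos : 0 < K := lt_of_lt_of_le one_pos hK
  have hK0 : K ≠ 0 := hKpos.ne'
  have hiK : 0 < 1 / K := by positivity
  have hR0 : 0 < R := by linarith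
  set R' := R ^ (1 / K) with hR'def
  have hR'1 : 1 ≤ R' := by
    rw [hR'def]
    exact one_le_rpow' hR.le hiK.le
  refine ⟨Gmap K, ?_, ?_, ?_, ?_, ?_, ?_⟩
  · -- pinned formula on the open ellipse minus the slit
    rintro z ⟨hzE, hzS⟩
    obtain ⟨w, hwS, hwz⟩ := preS hzS
    have hw1 : 1 < ‖w‖ := hwS
    have hw0 : w ≠ 0 := by
      intro h0; rw [h0] at hw1; simp at hw1; linarith
    have hwR : ‖w‖ < R := by
      have h1 := jou_ellipse w hw0
      rw [hwz] at h1
      simp only [openEllipse, Set.mem_setOf_eq, one_div] at hzE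
      exact lt_of_sum_inv_lt hR.le (by linarith)
    have hex : ∃ a ∈ annulus R, joukowski a = z := ⟨w, ⟨hw1, hwR⟩, hwz⟩
    have h1 := Function.invFunOn_mem hex
    have h2 := Function.invFunOn_eq hex
    have hexS : ∃ a ∈ S, joukowski a = z := ⟨w, hwS, hwz⟩
    have h3 := Function.invFunOn_mem hexS
    have h4 := Function.invFunOn_eq hexS
    have heq : Function.invFunOn joukowski S z = Function.invFunOn joukowski (annulus R) z :=
      jou_injOn_S h3 h1.1 (by rw [h4, h2])
    rw [Gmap, if_neg hzS, heq]
  · -- continuity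
    have hA : IsCompact (Ann R) := by
      rw [Metric.isCompact_iff_isClosed_bounded]
      constructor
      · have : Ann R = (fun w : ℂ => ‖w‖) ⁻¹' (Set.Icc 1 R) := by
          ext w; simp [Ann, Set.mem_Icc]
        rw [this]
        exact isClosed_Icc.preimage continuous_norm
      · apply (Metric.isBounded_closedBall (x := (0:ℂ)) (r := R)).subset
        intro w hw
        simp only [Metric.mem_closedBall, dist_zero_right]
        simpa using hw.2
    have hmapsto : Set.MapsTo joukowski (Ann R) (closedEllipse R) := by
      intro w hw
      rw [← jou_image R hR.le]
      exact ⟨w, hw, rfl⟩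
    have hφcont : ContinuousOn joukowski {w : ℂ | w ≠ 0} := by
      intro w hw
      have : ContinuousAt joukowski w := by
        have := ContinuousAt.add (continuousAt_id (x := w)) (continuousAt_inv₀ hw)
        exact this
      exact this.continuousWithinAt
    have hρcont : ContinuousOn (radialStretching K) (Ann R) := by
      apply ContinuousOn.mul continuousOn_id
      apply Continuous.comp_continuousOn Complex.continuous_ofReal
      apply ContinuousOn.rpow_const continuous_norm.continuousOn
      intro w hw
      left
      have h1 : (1:ℝ) ≤ ‖w‖ := hw.1
      intro h
      rw [h] at h1
      linarith
    have hcomp : ContinuousOn (fun w => joukowski (radialStretching K w)) (Ann R) := by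
      apply ContinuousOn.comp hφcont hρcont
      intro w hw
      have hw0 : w ≠ 0 := by
        intro h0; rw [h0] at hw; simp [Ann] at hw; linarith [hw.1]
      exact rho_ne_zero K hw0
    rw [continuousOn_iff_continuous_restrict]
    have hcs : CompactSpace (Ann R) := isCompact_iff_compactSpace.mp hA
    have hpcont : Continuous (Set.MapsTo.restrict joukowski _ _ hmapsto) :=
      (hφcont.mono (by intro w hw; intro h0; rw [h0] at hw; simp [Ann] at hw; linarith [hw.1])
        : ContinuousOn joukowski (Ann R)).mapsToRestrict hmapsto
    have hpsurj : Function.Surjective (Set.MapsTo.restrict joukowski _ _ hmapsto) := by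
      rintro ⟨z, hz⟩
      rw [← jou_image R hR.le] at hz
      obtain ⟨w, hw, hwz⟩ := hz
      exact ⟨⟨w, hw⟩, Subtype.ext hwz⟩
    have hq := (hpcont.isClosedMap).isQuotientMap hpcont hpsurj
    rw [hq.continuous_iff]
    have heqfun : (closedEllipse R).domRestrict (Gmap K) ∘ (Set.MapsTo.restrict joukowski _ _ hmapsto)
        = fun w : (Ann R) => joukowski (radialStretching K w.1) := by
      funext w
      have : ((Set.MapsTo.restrict joukowski _ _ hmapsto) w : ℂ) = joukowski w.1 := rfl
      simp only [Function.comp_apply, Set.domRestrict_apply, this]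
      exact Gmap_jou K w.2.1
    rw [heqfun]
    exact continuousOn_iff_continuous_restrict.mp hcomp
  · -- bijectivity
    refine ⟨?_, ?_, ?_⟩
    · -- MapsTo
      intro z hz
      rw [← jou_image R hR.le] at hz
      obtain ⟨w, ⟨hw1, hw2⟩, rfl⟩ := hz
      have hw0 : w ≠ 0 := by
        intro h0; rw [h0] at hw1; simp at hw1; linarith
      rw [Gmap_jou K hw1, ← jou_image R' hR'1]
      refine ⟨radialStretching K w, ⟨?_, ?_⟩, rfl⟩
      · rw [rho_abs K hw0]
        exact one_le_rpow' hw1 hiK.le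
      · rw [rho_abs K hw0, hR'def]
        exact Real.rpow_le_rpow (by positivity) hw2 hiK.le
    · -- InjOn
      intro z1 hz1 z2 hz2 heq
      rw [← jou_image R hR.le] at hz1 hz2
      obtain ⟨w1, ⟨h11, h12⟩, rfl⟩ := hz1
      obtain ⟨w2, ⟨h21, h22⟩, rfl⟩ := hz2
      rw [Gmap_jou K h11, Gmap_jou K h21] at heq
      have hw10 : w1 ≠ 0 := by
        intro h0; rw [h0] at h11; simp at h11; linarith
      have hw20 : w2 ≠ 0 := by
        intro h0; rw [h0] at h21; simp at h21; linarith
      rcases jou_eq_iff (rho_ne_zero K hw10) (rho_ne_zero K hw20) heq with h | h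
      · have := congrArg (radialStretching K⁻¹) h
        rw [rho_rho K hK0, rho_rho K hK0] at this
        rw [this]
      · -- product one forces both on the unit circle
        have hm : ‖radialStretching K w1‖ * ‖radialStretching K w2‖ = 1 := by
          rw [← norm_mul, h, norm_one]
        have ha1 : 1 ≤ ‖radialStretching K w1‖ := by
          rw [rho_abs K hw10]
          exact one_le_rpow' h11 hiK.le
        have ha2 : 1 ≤ ‖radialStretching K w2‖ := by
          rw [rho_abs K hw20]
          exact one_le_rpow' h21 hiK.le
        have e1 : ‖radialStretching K w1‖ = 1 := by nlinarith
        have e2 : ‖radialStretching K w2‖ = 1 := by nlinarith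
        have hu1 : ‖w1‖ = 1 := by
          by_contra hc
          have hlt : 1 < ‖w1‖ := lt_of_le_of_ne h11 (Ne.symm hc)
          have : (1:ℝ) ^ (1/K) < ‖w1‖ ^ (1/K) :=
            Real.rpow_lt_rpow (by norm_num) hlt hiK
          rw [Real.one_rpow, ← rho_abs K hw10] at this
          linarith [e1 ▸ this]
        have hu2 : ‖w2‖ = 1 := by
          by_contra hc
          have hlt : 1 < ‖w2‖ := lt_of_le_of_ne h21 (Ne.symm hc)
          have : (1:ℝ) ^ (1/K) < ‖w2‖ ^ (1/K) :=
            Real.rpow_lt_rpow (by norm_num) hlt hiK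
          rw [Real.one_rpow, ← rho_abs K hw20] at this
          linarith [e2 ▸ this]
        rw [rho_unit K hu1, rho_unit K hu2] at heq
        exact heq
    · -- SurjOn
      intro z hz
      rw [← jou_image R' hR'1] at hz
      obtain ⟨w', ⟨h1, h2⟩, rfl⟩ := hz
      have hw'0 : w' ≠ 0 := by
        intro h0; rw [h0] at h1; simp at h1; linarith
      set w := radialStretching K⁻¹ w' with hwdef
      have hwabs : ‖w‖ = ‖w'‖ ^ K := by
        rw [hwdef, rho_abs K⁻¹ hw'0, one_div, inv_inv]
      have hw1 : 1 ≤ ‖w‖ := by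
        rw [hwabs]
        exact one_le_rpow' h1 hKpos.le
      have hwR : ‖w‖ ≤ R := by
        have hRK : R' ^ K = R := by
          rw [hR'def, ← Real.rpow_mul hR0.le]
          rw [show 1 / K * K = 1 by field_simp, Real.rpow_one]
        rw [hwabs, ← hRK]
        exact Real.rpow_le_rpow (by positivity) h2 hKpos.le
      refine ⟨joukowski w, ?_, ?_⟩
      · rw [← jou_image R hR.le]
        exact ⟨w, ⟨hw1, hwR⟩, rfl⟩
      · rw [Gmap_jou K hw1, hwdef, rho_rho' K hK0]
  · -- G 2 = 2
    rw [Gmap, if_pos (right_mem_segment ℝ (-2 : ℂ) 2)]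
  · -- G (-2) = -2
    rw [Gmap, if_pos (left_mem_segment ℝ (-2 : ℂ) 2)]
  · -- identity on the slit
    intro x hx
    rw [Gmap, if_pos hx]
end

section
/- Fix K ≥ 1. There is no constant C < 4^{1-1/K} such that for all pairs of positive reals (a, b) with a = 4/(R^{1/K}+R^{-1/K}) and b = 4/(R+1/R) for some R > 1, one has a ≤ C·b^{1/K}. -/
open Filter Real

theorem no_smaller_constant (K : ℝ) (hK : 1 ≤ K) :
    ¬ ∃ C : ℝ, C < 4 ^ (1 - 1 / K) ∧
      ∀ R : ℝ, 1 < R →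
        4 / (R ^ (1 / K) + R ^ (-(1 / K))) ≤ C * (4 / (R + 1 / R)) ^ (1 / K) := by
  rintro ⟨C, hC, hCall⟩
  have hK0 : (0:ℝ) < K := lt_of_lt_of_le one_pos hK
  set L : ℝ := (4:ℝ) ^ (1 - 1 / K) with hL
  set g : ℝ → ℝ := fun R => 4 / (R ^ (1 / K) + R ^ (-(1 / K))) / (4 / (R + 1 / R)) ^ (1 / K)
    with hg
  set h : ℝ → ℝ := fun R => L * ((1 + R⁻¹ ^ 2) ^ (1 / K) / (1 + R ^ (-(2 / K)))) with hh
  -- tendsto of h to L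
  have h1 : Tendsto (fun R : ℝ => R⁻¹ ^ 2) atTop (nhds 0) := by
    have := (tendsto_inv_atTop_zero (𝕜 := ℝ)).pow 2
    simpa using this
  have h2 : Tendsto (fun R : ℝ => R ^ (-(2 / K))) atTop (nhds 0) :=
    tendsto_rpow_neg_atTop (by positivity)
  have h3 : Tendsto (fun R : ℝ => (1 + R⁻¹ ^ 2) ^ (1 / K)) atTop (nhds 1) := by
    have : Tendsto (fun R : ℝ => 1 + R⁻¹ ^ 2) atTop (nhds 1) := by
      simpa using (tendsto_const_nhds.add h1)
    have := this.rpow_const (Or.inr (by positivity : (0:ℝ) ≤ 1 / K))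
    simpa using this
  have h4 : Tendsto (fun R : ℝ => 1 + R ^ (-(2 / K))) atTop (nhds 1) := by
    simpa using (tendsto_const_nhds.add h2)
  have hhL : Tendsto h atTop (nhds L) := by
    have : Tendsto (fun R : ℝ => L * ((1 + R⁻¹ ^ 2) ^ (1 / K) / (1 + R ^ (-(2 / K)))))
        atTop (nhds (L * (1 / 1))) :=
      Tendsto.mul tendsto_const_nhds (h3.div h4 one_ne_zero)
    simpa [hh] using this
  -- eventual equality g = h
  have heq : ∀ᶠ R in atTop, g R = h R := by
    filter_upwards [eventually_gt_atTop 1] with R hR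
    have hR0 : (0:ℝ) < R := lt_trans one_pos hR
    have hRK : (0:ℝ) < R ^ (1 / K) := rpow_pos_of_pos hR0 _
    have hsum : R + 1 / R = R * (1 + R⁻¹ ^ 2) := by
      field_simp
    have hden : R ^ (1 / K) + R ^ (-(1 / K)) = R ^ (1 / K) * (1 + R ^ (-(2 / K))) := by
      rw [mul_add, mul_one, ← Real.rpow_add hR0]
      congr 2
      ring
    have hpos2 : (0:ℝ) < 1 + R ^ (-(2 / K)) := by positivity
    have hpos1 : (0:ℝ) < 1 + R⁻¹ ^ 2 := by positivity
    have hnum : (4 / (R + 1 / R)) ^ (1 / K)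
        = 4 ^ (1 / K) / (R ^ (1 / K) * (1 + R⁻¹ ^ 2) ^ (1 / K)) := by
      rw [hsum, Real.div_rpow (by norm_num) (by positivity),
        Real.mul_rpow hR0.le hpos1.le]
    have hL4 : L = 4 / 4 ^ (1 / K) := by
      rw [hL, Real.rpow_sub (by norm_num), Real.rpow_one]
    have h4K : (0:ℝ) < (4:ℝ) ^ (1 / K) := rpow_pos_of_pos (by norm_num) _
    have hp1 : (0:ℝ) < (1 + R⁻¹ ^ 2) ^ (1 / K) := rpow_pos_of_pos hpos1 _
    simp only [hg, hh]
    rw [hden, hnum, hL4]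
    field_simp
  -- from the hypothesis, g R ≤ C eventually
  have hle : ∀ᶠ R in atTop, g R ≤ C := by
    filter_upwards [eventually_gt_atTop 1] with R hR
    have hR0 : (0:ℝ) < R := lt_trans one_pos hR
    have hb : (0:ℝ) < (4 / (R + 1 / R)) ^ (1 / K) := by
      apply rpow_pos_of_pos
      positivity
    simp only [hg]
    rw [div_le_iff₀ hb]
    exact hCall R hR
  have heq' : g =ᶠ[atTop] h := heq
  have hgl : Tendsto g atTop (nhds L) := hhL.congr' heq'.symm
  have : L ≤ C := le_of_tendsto hgl hle
  exact absurd hC (not_lt.mpr this)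
end
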